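/- Let L = F e₀ ⋉ V be an indecomposable almost Abelian Lie algebra, and suppose there exists a nonzero linear functional β on V with [L,L] ⊆ ker β and (β v)[e₀,v'] = (β v')[e₀,v] for all v, v' ∈ V. Then L is isomorphic to the Heisenberg algebra H_F. -/

import Mathlib

variable {F : Type*} [Field F] {V : Type*} [AddCommGroup V] [Module F V]

/-- The almost Abelian Lie algebra `F e₀ ⋉ V` determined by the operator `T = ad_{e₀}|_V`:
the underlying vector space is `F × V`, with bracket `[(t,v),(s,w)] = (0, t • T w - s • T v)`. -/
def AA (F V : Type*) [Field F] [AddCommGroup V] [Module F V] (_T : Module.End F V) : Type _ :=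
  F × V

namespace AA

variable {T : Module.End F V}

instance : AddCommGroup (AA F V T) := inferInstanceAs (AddCommGroup (F × V))
instance : Module F (AA F V T) := inferInstanceAs (Module F (F × V))

instance : LieRing (AA F V T) where
  bracket := fun (x y : F × V) => (((0 : F), x.1 • T y.2 - y.1 • T x.2) : F × V)
  add_lie := by
    rintro ⟨a, u⟩ ⟨b, v⟩ ⟨c, w⟩
    show (((0 : F), (a + b) • T w - c • T (u + v)) : F × V)
      = (((0 : F), a • T w - c • T u) : F × V) + (((0 : F), b • T w - c • T v) : F × V)
    ext
    · simp
    · show (a + b) • T w - c • T (u + v) = (a • T w - c • T u) + (b • T w - c • T v)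
      simp only [map_add, smul_add, add_smul]
      module
  lie_add := by
    rintro ⟨a, u⟩ ⟨b, v⟩ ⟨c, w⟩
    show (((0 : F), a • T (v + w) - (b + c) • T u) : F × V)
      = (((0 : F), a • T v - b • T u) : F × V) + (((0 : F), a • T w - c • T u) : F × V)
    ext
    · simp
    · show a • T (v + w) - (b + c) • T u = (a • T v - b • T u) + (a • T w - c • T u)
      simp only [map_add, smul_add, add_smul]
      module
  lie_self := by
    rintro ⟨a, u⟩
    show (((0 : F), a • T u - a • T u) : F × V) = (0 : F × V)
    ext
    · simp
    · show a • T u - a • T u = (0 : V)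
      simp
  leibniz_lie := by
    rintro ⟨a, u⟩ ⟨b, v⟩ ⟨c, w⟩
    show (((0 : F), a • T (b • T w - c • T v) - (0 : F) • T u) : F × V)
      = (((0 : F), (0 : F) • T w - c • T (a • T v - b • T u)) : F × V)
        + (((0 : F), b • T (a • T w - c • T u) - (0 : F) • T v) : F × V)
    ext
    · simp
    · show a • T (b • T w - c • T v) - (0 : F) • T u
        = ((0 : F) • T w - c • T (a • T v - b • T u)) + (b • T (a • T w - c • T u) - (0 : F) • T v)
      simp only [map_sub, map_smul, zero_smul, smul_sub, smul_smul]
      module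

instance : LieAlgebra F (AA F V T) where
  lie_smul := by
    rintro r ⟨a, u⟩ ⟨b, v⟩
    show (((0 : F), a • T (r • v) - (r • b) • T u) : F × V)
      = r • (((0 : F), a • T v - b • T u) : F × V)
    ext
    · simp
    · show a • T (r • v) - (r • b) • T u = r • (a • T v - b • T u)
      simp only [map_smul, smul_sub, smul_smul, smul_eq_mul]
      module

/-- The distinguished element `e₀`. -/
def e0 (T : Module.End F V) : AA F V T := ((1, 0) : F × V)

/-- The inclusion of the Abelian ideal `V` into `F e₀ ⋉ V`. -/
def incl (T : Module.End F V) : V →ₗ[F] AA F V T where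
  toFun v := ((0, v) : F × V)
  map_add' u v := by
    show (((0 : F), u + v) : F × V) = (((0 : F), u) : F × V) + (((0 : F), v) : F × V)
    ext <;> simp
  map_smul' r v := by
    show (((0 : F), r • v) : F × V) = r • (((0 : F), v) : F × V)
    ext <;> simp

@[simp] lemma bracket_e0_incl (v : V) : ⁅e0 T, incl T v⁆ = incl T (T v) := by
  show (((0 : F), (1 : F) • T v - (0 : F) • T (0 : V)) : F × V) = (((0 : F), T v) : F × V)
  ext <;> simp

end AA


/-- A Lie algebra is indecomposable if it is not the direct sum of two nonzero ideals. -/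
def LieIndecomposable (F L : Type*) [Field F] [LieRing L] [LieAlgebra F L] : Prop :=
  ¬∃ (I J : LieIdeal F L), I ≠ ⊥ ∧ J ≠ ⊥ ∧ I ⊓ J = ⊥ ∧ I ⊔ J = ⊤

/-- The operator defining the Heisenberg algebra: `T (a, b) = (b, 0)`. -/
def heisT (F : Type*) [Field F] : Module.End F (F × F) :=
  (LinearMap.snd F F F).prod 0

/-- The Heisenberg Lie algebra `H_F`, with basis `e₀, e₁ = ((0,(1,0)))`, `e₂ = ((0,(0,1)))` and
relations `[e₀, e₂] = e₁`, `[e₀, e₁] = [e₁, e₂] = 0`. -/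
abbrev Heisenberg (F : Type*) [Field F] : Type _ := AA F (F × F) (heisT F)

/-- If `L = F e₀ ⋉ V` is indecomposable and there is a nonzero functional `β` on `V` with
`[L,L] ⊆ ker β` and `(β v) [e₀,v'] = (β v') [e₀,v]` for all `v, v'`, then `L` is isomorphic to the
Heisenberg algebra. -/
theorem stmt16 (F V : Type*) [Field F] [AddCommGroup V] [Module F V]
    (T : Module.End F V) (hT : T ≠ 0) (hind : LieIndecomposable F (AA F V T))
    (β : V →ₗ[F] F) (hβ : β ≠ 0)
    (h₁ : ∀ v : V, β (T v) = 0)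
    (h₂ : ∀ v v' : V, β v • T v' = β v' • T v) :
    Nonempty (AA F V T ≃ₗ⁅F⁆ Heisenberg F) := by
  classical
  -- Step 1: find a "cyclic" vector v₀ with β v₀ = 1, set u = T v₀.
  obtain ⟨v₁, hv₁⟩ : ∃ v, T v ≠ 0 := by
    by_contra h
    push_neg at h
    exact hT (by ext v; simp [h v])
  have hβv₁ : β v₁ ≠ 0 := by
    intro h0
    apply hβ
    ext v
    have hvv := h₂ v v₁
    rw [h0, zero_smul] at hvv
    rcases smul_eq_zero.mp hvv with h | h
    · simpa using h
    · exact absurd h hv₁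
  set v₀ : V := (β v₁)⁻¹ • v₁ with hv₀def
  have hβv₀ : β v₀ = 1 := by
    simp [hv₀def, inv_mul_cancel₀ hβv₁]
  set u : V := T v₀ with hudef
  have hu0 : β u = 0 := h₁ v₀
  have hune : u ≠ 0 := by
    rw [hudef, hv₀def, map_smul]
    exact smul_ne_zero (inv_ne_zero hβv₁) hv₁
  have hTv : ∀ v, T v = β v • u := by
    intro v
    have hvv := h₂ v v₀
    rw [hβv₀, one_smul] at hvv
    exact hvv.symm
  have hTu : T u = 0 := by rw [hTv u, hu0, zero_smul]
  -- bracket formula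
  have hbr : ∀ x y : AA F V T,
      ⁅x, y⁆ = (x.1 * β y.2 - y.1 * β x.2) • AA.incl T u := by
    rintro ⟨a, v⟩ ⟨b, w⟩
    show (((0 : F), a • T w - b • T v) : F × V)
      = ((a * β w - b * β v) • (((0 : F), u) : F × V))
    rw [hTv w, hTv v]
    ext
    · show (0 : F) = (a * β w - b * β v) • (0 : F)
      simp
    · show a • β w • u - b • β v • u = (a * β w - b * β v) • u
      rw [sub_smul, mul_smul, mul_smul]
  -- Step 2: ker β = span {u}, via indecomposability
  have hker : ∀ w : V, β w = 0 → w ∈ Submodule.span F {u} := by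
    by_contra hcon
    push_neg at hcon
    obtain ⟨w, hw0, hwn⟩ := hcon
    set K : Submodule F V := LinearMap.ker β with hKdef
    set S : Submodule F V := Submodule.span F {u} with hSdef
    have hSK : S ≤ K := by
      rw [hSdef, Submodule.span_le, Set.singleton_subset_iff]
      exact hu0
    obtain ⟨q, hq⟩ := Submodule.exists_isCompl (S.comap K.subtype)
    set W : Submodule F V := q.map K.subtype with hWdef
    have hWK : W ≤ K := Submodule.map_subtype_le K q
    have hSWdisj : ∀ x : V, x ∈ S → x ∈ W → x = 0 := by
      intro x hxS hxW
      obtain ⟨y, hy, rfl⟩ := hxW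
      have hyp : y ∈ (S.comap K.subtype) ⊓ q := ⟨hxS, hy⟩
      rw [hq.inf_eq_bot] at hyp
      rw [hyp]
      rfl
    have hSWsup : S ⊔ W = K := by
      have h1 : Submodule.map K.subtype (S.comap K.subtype) = S := by
        rw [Submodule.map_comap_subtype, inf_eq_right.mpr hSK]
      calc S ⊔ W = Submodule.map K.subtype ((S.comap K.subtype) ⊔ q) := by
            rw [Submodule.map_sup, h1]
        _ = K := by rw [hq.sup_eq_top, Submodule.map_subtype_top]
    have hwK : w ∈ K := LinearMap.mem_ker.mpr hw0
    have hWne : W ≠ ⊥ := by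
      intro hWbot
      apply hwn
      have : w ∈ S ⊔ W := hSWsup ▸ hwK
      rwa [hWbot, sup_bot_eq] at this
    obtain ⟨w', hw'W, hw'ne⟩ := Submodule.exists_mem_ne_zero_of_ne_bot hWne
    -- build the two ideals
    refine hind ?_
    refine ⟨{ Submodule.span F {AA.e0 T, AA.incl T u, AA.incl T v₀} with
        lie_mem := fun {x m} _ => ?_ },
      { Submodule.map (AA.incl T) W with
        lie_mem := fun {x m} hm => ?_ }, ?_, ?_, ?_, ?_⟩
    · rw [hbr]
      exact Submodule.smul_mem _ _ (Submodule.subset_span (by simp))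
    · obtain ⟨w'', hw'', rfl⟩ := hm
      have hβw'' : β w'' = 0 := LinearMap.mem_ker.mp (hWK hw'')
      rw [hbr]
      have h1 : (AA.incl T w'').2 = w'' := rfl
      have h2 : (AA.incl T w'').1 = (0 : F) := rfl
      rw [h1, h2, hβw'', mul_zero, zero_mul, sub_zero, zero_smul]
      exact Submodule.zero_mem _
    · -- I ≠ ⊥
      intro hbot
      have hmem : AA.e0 T ∈ Submodule.span F {AA.e0 T, AA.incl T u, AA.incl T v₀} :=
        Submodule.subset_span (by simp)
      have : AA.e0 T = 0 := by
        rw [LieSubmodule.eq_bot_iff] at hbot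
        exact hbot _ hmem
      exact one_ne_zero (congrArg Prod.fst this)
    · -- J ≠ ⊥
      intro hbot
      rw [LieSubmodule.eq_bot_iff] at hbot
      have : AA.incl T w' = 0 := hbot _ ⟨w', hw'W, rfl⟩
      exact hw'ne (by
        have := congrArg Prod.snd this
        exact this)
    · -- I ⊓ J = ⊥
      rw [LieSubmodule.eq_bot_iff]
      intro m hm
      rw [LieSubmodule.mem_inf] at hm
      obtain ⟨hmI, hmJ⟩ := hm
      obtain ⟨w'', hw''W, rfl⟩ := hmJ
      have hmI' : AA.incl T w''
          ∈ Submodule.span F {AA.e0 T, AA.incl T u, AA.incl T v₀} := hmI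
      rw [Submodule.mem_span_insert] at hmI'
      obtain ⟨a, z, hz, hzeq⟩ := hmI'
      rw [Submodule.mem_span_pair] at hz
      obtain ⟨b, c, rfl⟩ := hz
      have hrhs : a • AA.e0 T + (b • AA.incl T u + c • AA.incl T v₀)
          = ((a, b • u + c • v₀) : F × V) := by
        show (a • (((1 : F), (0 : V)) : F × V)
            + (b • (((0 : F), u) : F × V) + c • (((0 : F), v₀) : F × V)) : F × V) = _
        ext
        · show a * 1 + (b * 0 + c * 0) = a
          ring
        · show a • (0 : V) + (b • u + c • v₀) = b • u + c • v₀
          simp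
      rw [hrhs] at hzeq
      have hfst : (0 : F) = a := congrArg Prod.fst hzeq
      have hsnd : w'' = b • u + c • v₀ := congrArg Prod.snd hzeq
      have hβw'' : β w'' = 0 := LinearMap.mem_ker.mp (hWK hw''W)
      have hc : c = 0 := by
        have := hβw''
        rw [hsnd] at this
        simpa [hu0, hβv₀] using this
      have hw''0 : w'' = 0 := by
        apply hSWdisj w'' _ hw''W
        rw [hsnd, hc, zero_smul, add_zero]
        exact Submodule.smul_mem _ _ (Submodule.mem_span_singleton_self u)
      rw [hw''0]
      show AA.incl T 0 = 0
      exact map_zero _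
    · -- I ⊔ J = ⊤
      rw [eq_top_iff]
      rintro ⟨a, v⟩ -
      have hkv : v - β v • v₀ ∈ K := by
        rw [hKdef, LinearMap.mem_ker, map_sub, map_smul, hβv₀]
        simp
      rw [← hSWsup, Submodule.mem_sup] at hkv
      obtain ⟨s, hsS, w'', hw''W, hsw⟩ := hkv
      obtain ⟨c, rfl⟩ := Submodule.mem_span_singleton.mp hsS
      refine (LieSubmodule.mem_sup _ _ _).mpr ?_
      refine ⟨a • AA.e0 T + c • AA.incl T u + β v • AA.incl T v₀, ?_, AA.incl T w'', ?_, ?_⟩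
      · refine Submodule.add_mem _ (Submodule.add_mem _ ?_ ?_) ?_ <;>
          exact Submodule.smul_mem _ _ (Submodule.subset_span (by simp))
      · exact ⟨w'', hw''W, rfl⟩
      · have hv : v = c • u + w'' + β v • v₀ := by
          have h := hsw
          rw [eq_sub_iff_add_eq] at h
          exact h.symm
        show ((a • ((1 : F), (0 : V)) + c • (((0 : F), u) : F × V)
            + β v • (((0 : F), v₀) : F × V)) + (((0 : F), w'') : F × V) : F × V)
          = ((a, v) : F × V)
        ext
        · show a * 1 + c * 0 + β v * 0 + 0 = a
          ring
        · show a • (0 : V) + c • u + β v • v₀ + w'' = v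
          rw [smul_zero, zero_add]
          conv_rhs => rw [hv]
          abel
  -- Step 3: build the isomorphism
  let ψ : (F × F) →ₗ[F] V :=
    { toFun := fun p => p.1 • u + p.2 • v₀
      map_add' := by
        intro p q
        simp only [Prod.fst_add, Prod.snd_add, add_smul]
        abel
      map_smul' := by
        intro r p
        simp only [Prod.smul_fst, Prod.smul_snd, smul_eq_mul, mul_smul, RingHom.id_apply,
          smul_add] }
  have hψ : ∀ p : F × F, ψ p = p.1 • u + p.2 • v₀ := fun _ => rfl
  have hinj : Function.Injective ψ := by
    rw [injective_iff_map_eq_zero]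
    intro p hp
    rw [hψ] at hp
    have h2 : p.2 = 0 := by
      have := congrArg β hp
      simpa [hu0, hβv₀] using this
    have h1 : p.1 = 0 := by
      rw [h2, zero_smul, add_zero, smul_eq_zero] at hp
      exact hp.resolve_right hune
    exact Prod.ext h1 h2
  have hsurj : Function.Surjective ψ := by
    intro v
    obtain ⟨c, hc⟩ := Submodule.mem_span_singleton.mp
      (hker (v - β v • v₀) (by rw [map_sub, map_smul, hβv₀]; simp))
    refine ⟨(c, β v), ?_⟩
    show c • u + β v • v₀ = v
    rw [hc]
    abel
  let Φ : (F × F) ≃ₗ[F] V := LinearEquiv.ofBijective ψ ⟨hinj, hsurj⟩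
  have hΦT : ∀ p : F × F, T (Φ p) = Φ (heisT F p) := by
    intro p
    show T (ψ p) = ψ (p.2, 0)
    rw [hψ, hψ]
    simp only [map_add, map_smul, hTu, smul_zero]
    rw [← hudef]
    simp
  let E : Heisenberg F ≃ₗ[F] AA F V T :=
    (LinearEquiv.refl F F).prodCongr Φ
  refine ⟨LieEquiv.symm
    { toLinearMap := E.toLinearMap
      map_lie' := ?_
      invFun := E.symm
      left_inv := E.left_inv
      right_inv := E.right_inv }⟩
  intro x y
  show (((0 : F), Φ (x.1 • heisT F y.2 - y.1 • heisT F x.2)) : F × V)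
      = (((0 : F), x.1 • T (Φ y.2) - y.1 • T (Φ x.2)) : F × V)
  have hc : Φ (x.1 • heisT F y.2 - y.1 • heisT F x.2)
      = x.1 • T (Φ y.2) - y.1 • T (Φ x.2) := by
    rw [map_sub, map_smul, map_smul, ← hΦT, ← hΦT]
  rw [hc]
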